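/- Lower bound on cumulative allocation under GPA when the hub is not exhausted: for any threshold vector γ_1,…,γ_n with γ_i ∈ [0,1], let ℓ be the allocation produced by the GPA policy, and suppose the remaining hub supply at the end of the horizon is positive (s^end = s − Σ_i L_i > 0). Then for every site i ∈ {1,…,n} and every time step t ∈ {0,1,…,T}, the cumulative allocation satisfies L_i^t ≥ γ_i·D_i^t + (k_i^{t+1} − b_i)_+; in particular the total allocation satisfies L_i ≥ γ_i·D_i. -/

import Mathlib

open Finset

/-- `stock b d ℓ t` is the post-replenishment stock `k^{t+1}` at a single site
(with `stock b d ℓ 0 = k^1 = b`), under demands `d` and allocations `ℓ`. -/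
noncomputable def stock (b : ℕ) (d : ℕ → ℕ) (ℓ : ℕ → ℝ) : ℕ → ℝ
  | 0 => (b : ℝ)
  | t + 1 => max (stock b d ℓ t - (d (t + 1) : ℝ)) 0 + ℓ (t + 1)

/-- Sitewise transport cost `Σ_{t=1}^T w_i ⌈ℓ_i^t / c_i⌉`. -/
noncomputable def transportCost (T : ℕ) (wi : ℝ) (ci : ℕ) (ℓ : ℕ → ℝ) : ℝ :=
  ∑ t ∈ Icc 1 T, wi * (⌈ℓ t / (ci : ℝ)⌉ : ℝ)

/-- Sitewise lost-sales penalty `Σ_{t=1}^T p (d_i^t − k_i^t)_+`. -/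
noncomputable def penaltyCost (T : ℕ) (p : ℝ) (b : ℕ) (d : ℕ → ℕ) (ℓ : ℕ → ℝ) : ℝ :=
  ∑ t ∈ Icc 1 T, p * max ((d t : ℝ) - stock b d ℓ (t - 1)) 0

/-- Total cost of an allocation. -/
noncomputable def totalCost {n : ℕ} (T : ℕ) (w : Fin n → ℝ) (c b : Fin n → ℕ)
    (p : ℝ) (d : Fin n → ℕ → ℕ) (ℓ : Fin n → ℕ → ℝ) : ℝ :=
  ∑ i, (transportCost T (w i) (c i) (ℓ i) + penaltyCost T p (b i) (d i) (ℓ i))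

/-- One time step of GPA: eligible sites are processed in index order; site `i` is
eligible if `r i < b i` and `Lprev i ≤ γ i * Dt i`; an eligible site requests
`⌈(b i − r i)/c i⌉` full shipments and receives the min of that and the remaining
hub supply. Returns the remaining supply and the per-site allocation. -/
noncomputable def gpaInner {n : ℕ} (b c : Fin n → ℕ) (γ : Fin n → ℝ)
    (Dt Lprev r : Fin n → ℕ) (rem : ℕ) : ℕ × (Fin n → ℕ) :=
  (List.finRange n).foldl
    (fun (st : ℕ × (Fin n → ℕ)) (i : Fin n) =>
      if r i < b i ∧ (Lprev i : ℝ) ≤ γ i * (Dt i : ℝ) then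
        let q : ℕ := (b i - r i + c i - 1) / c i
        let give : ℕ := min st.1 (c i * q)
        (st.1 - give, Function.update st.2 i give)
      else st)
    (rem, fun _ => 0)

/-- GPA state after `t` time steps: (remaining hub supply, current stocks `k^{t+1}`,
cumulative allocations `L^t`). Initially `(s, b, 0)`. -/
noncomputable def gpaState {n : ℕ} (b c : Fin n → ℕ) (γ : Fin n → ℝ)
    (d : Fin n → ℕ → ℕ) (s : ℕ) : ℕ → ℕ × (Fin n → ℕ) × (Fin n → ℕ)
  | 0 => (s, b, fun _ => 0)
  | t + 1 =>
    let st := gpaState b c γ d s t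
    let r : Fin n → ℕ := fun i => st.2.1 i - d i (t + 1)
    let Dt : Fin n → ℕ := fun i => ∑ u ∈ Icc 1 (t + 1), d i u
    let res := gpaInner b c γ Dt st.2.2 r st.1
    (res.1, fun i => r i + res.2 i, fun i => st.2.2 i + res.2 i)

/-- Cumulative GPA allocation `L_i^t`. -/
noncomputable def gpaL {n : ℕ} (b c : Fin n → ℕ) (γ : Fin n → ℝ)
    (d : Fin n → ℕ → ℕ) (s : ℕ) (i : Fin n) (t : ℕ) : ℕ :=
  (gpaState b c γ d s t).2.2 i

/-- Per-step GPA allocation `ℓ_i^t` (as a real number). -/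
noncomputable def gpaAlloc {n : ℕ} (b c : Fin n → ℕ) (γ : Fin n → ℝ)
    (d : Fin n → ℕ → ℕ) (s : ℕ) (i : Fin n) (t : ℕ) : ℝ :=
  ((gpaL b c γ d s i t - gpaL b c γ d s i (t - 1) : ℕ) : ℝ)

section Aux
variable {n : ℕ} (b c : Fin n → ℕ) (γ : Fin n → ℝ) (Dt Lprev r : Fin n → ℕ)

noncomputable def gstep : ℕ × (Fin n → ℕ) → Fin n → ℕ × (Fin n → ℕ) :=
  fun st i =>
    if r i < b i ∧ (Lprev i : ℝ) ≤ γ i * (Dt i : ℝ) then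
      let q : ℕ := (b i - r i + c i - 1) / c i
      let give : ℕ := min st.1 (c i * q)
      (st.1 - give, Function.update st.2 i give)
    else st

lemma gpaInner_eq (rem : ℕ) :
    gpaInner b c γ Dt Lprev r rem
      = (List.finRange n).foldl (gstep b c γ Dt Lprev r) (rem, fun _ => 0) := rfl

lemma gstep_fst_le (st : ℕ × (Fin n → ℕ)) (i : Fin n) :
    (gstep b c γ Dt Lprev r st i).1 ≤ st.1 := by
  unfold gstep
  split
  · exact Nat.sub_le _ _
  · exact le_rfl

lemma foldl_fst_le : ∀ (l : List (Fin n)) (st : ℕ × (Fin n → ℕ)),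
    (l.foldl (gstep b c γ Dt Lprev r) st).1 ≤ st.1
  | [], st => le_rfl
  | i :: l, st =>
    (foldl_fst_le l _).trans (gstep_fst_le b c γ Dt Lprev r st i)

lemma gstep_snd_ne (st : ℕ × (Fin n → ℕ)) (i j : Fin n) (h : j ≠ i) :
    (gstep b c γ Dt Lprev r st i).2 j = st.2 j := by
  unfold gstep
  split
  · exact Function.update_of_ne h _ _
  · rfl

lemma foldl_snd_ne : ∀ (l : List (Fin n)) (st : ℕ × (Fin n → ℕ)) (j : Fin n),
    j ∉ l → (l.foldl (gstep b c γ Dt Lprev r) st).2 j = st.2 j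
  | [], st, j, _ => rfl
  | i :: l, st, j, h => by
    have h1 : j ∉ l := fun hj => h (List.mem_cons_of_mem _ hj)
    have h2 : j ≠ i := fun hj => h (hj ▸ List.mem_cons_self)
    rw [List.foldl_cons, foldl_snd_ne l _ j h1, gstep_snd_ne b c γ Dt Lprev r st i j h2]

lemma foldl_conserve : ∀ (l : List (Fin n)) (st : ℕ × (Fin n → ℕ)),
    l.Nodup → (∀ i ∈ l, st.2 i = 0) →
    (l.foldl (gstep b c γ Dt Lprev r) st).1 + ∑ j, (l.foldl (gstep b c γ Dt Lprev r) st).2 j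
      = st.1 + ∑ j, st.2 j
  | [], st, _, _ => rfl
  | i :: l, st, hnd, h0 => by
    have hnd' : l.Nodup := (List.nodup_cons.mp hnd).2
    have hi : i ∉ l := (List.nodup_cons.mp hnd).1
    have h0' : ∀ j ∈ l, (gstep b c γ Dt Lprev r st i).2 j = 0 := by
      intro j hj
      have : j ≠ i := fun hji => hi (hji ▸ hj)
      rw [gstep_snd_ne b c γ Dt Lprev r st i j this]
      exact h0 j (List.mem_cons_of_mem _ hj)
    rw [List.foldl_cons, foldl_conserve l _ hnd' h0']
    have hzero : st.2 i = 0 := h0 i List.mem_cons_self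
    unfold gstep
    split
    · simp only
      rw [Finset.sum_update_of_mem (Finset.mem_univ i)]
      have hsum : ∑ j, st.2 j = ∑ j ∈ univ \ {i}, st.2 j + st.2 i :=
        Finset.sum_eq_sum_sdiff_singleton_add (Finset.mem_univ i) _
      have hgive : min st.1 (c i * ((b i - r i + c i - 1) / c i)) ≤ st.1 := min_le_left _ _
      omega
    · rfl

lemma foldl_value : ∀ (l : List (Fin n)) (st : ℕ × (Fin n → ℕ)),
    l.Nodup → 0 < (l.foldl (gstep b c γ Dt Lprev r) st).1 → ∀ i ∈ l,
    (l.foldl (gstep b c γ Dt Lprev r) st).2 i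
      = if r i < b i ∧ (Lprev i : ℝ) ≤ γ i * (Dt i : ℝ)
        then c i * ((b i - r i + c i - 1) / c i) else st.2 i
  | [], st, _, _, i, hi => absurd hi List.not_mem_nil
  | j :: l, st, hnd, hpos, i, hi => by
    have hnd' : l.Nodup := (List.nodup_cons.mp hnd).2
    have hj : j ∉ l := (List.nodup_cons.mp hnd).1
    rw [List.foldl_cons] at hpos ⊢
    rcases List.mem_cons.mp hi with hij | hil
    · subst hij
      rw [foldl_snd_ne b c γ Dt Lprev r l _ i hj]
      have hpos' : 0 < (gstep b c γ Dt Lprev r st i).1 :=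
        lt_of_lt_of_le hpos (foldl_fst_le b c γ Dt Lprev r l _)
      unfold gstep at hpos' ⊢
      by_cases helig : r i < b i ∧ (Lprev i : ℝ) ≤ γ i * (Dt i : ℝ)
      · simp only [if_pos helig, Function.update_self] at hpos' ⊢
        omega
      · simp only [if_neg helig]
    · rw [foldl_value l _ hnd' hpos i hil]
      have hij : i ≠ j := fun h => hj (h ▸ hil)
      rw [gstep_snd_ne b c γ Dt Lprev r st j i hij]

end Aux

section Outer
variable {n : ℕ} (b c : Fin n → ℕ) (γ : Fin n → ℝ) (d : Fin n → ℕ → ℕ) (s : ℕ)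

/-- The inner result at step `t+1`. -/
noncomputable def gres (t : ℕ) : ℕ × (Fin n → ℕ) :=
  gpaInner b c γ (fun j => ∑ u ∈ Icc 1 (t + 1), d j u)
    (gpaState b c γ d s t).2.2
    (fun j => (gpaState b c γ d s t).2.1 j - d j (t + 1))
    (gpaState b c γ d s t).1

lemma gpaState_succ (t : ℕ) :
    gpaState b c γ d s (t + 1)
      = ((gres b c γ d s t).1,
         fun i => ((gpaState b c γ d s t).2.1 i - d i (t + 1)) + (gres b c γ d s t).2 i,
         fun i => (gpaState b c γ d s t).2.2 i + (gres b c γ d s t).2 i) := rfl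

lemma gpaState_fst_succ_le (t : ℕ) :
    (gpaState b c γ d s (t + 1)).1 ≤ (gpaState b c γ d s t).1 := by
  rw [gpaState_succ]
  exact foldl_fst_le b c γ _ _ _ _ _

lemma gpaState_fst_mono {t u : ℕ} (h : t ≤ u) :
    (gpaState b c γ d s u).1 ≤ (gpaState b c γ d s t).1 := by
  induction u with
  | zero => simp_all
  | succ u ih =>
    rcases Nat.lt_succ_iff_lt_or_eq.mp (Nat.lt_succ_of_le h) with h' | h'
    · exact (gpaState_fst_succ_le b c γ d s u).trans (ih (Nat.lt_succ_iff.mp h'))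
    · rw [h']

lemma gpaState_conserve (t : ℕ) :
    (gpaState b c γ d s t).1 + ∑ j, (gpaState b c γ d s t).2.2 j = s := by
  induction t with
  | zero => simp [gpaState]
  | succ t ih =>
    rw [gpaState_succ]
    simp only
    have hcons := foldl_conserve b c γ (fun j => ∑ u ∈ Icc 1 (t + 1), d j u)
      (gpaState b c γ d s t).2.2
      (fun j => (gpaState b c γ d s t).2.1 j - d j (t + 1))
      (List.finRange n) ((gpaState b c γ d s t).1, fun _ => 0)
      (List.nodup_finRange n) (fun _ _ => rfl)
    rw [← gpaInner_eq] at hcons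
    rw [Finset.sum_add_distrib]
    simp only [Finset.sum_const_zero, add_zero] at hcons
    have : (gres b c γ d s t).1 + ∑ j, (gres b c γ d s t).2 j = (gpaState b c γ d s t).1 :=
      hcons
    omega

lemma gpaState_pos {T : ℕ} (hend : (∑ i, gpaL b c γ d s i T) < s) :
    ∀ t ≤ T, 0 < (gpaState b c γ d s t).1 := by
  intro t ht
  have hT : 0 < (gpaState b c γ d s T).1 := by
    have := gpaState_conserve b c γ d s T
    simp only [gpaL] at hend
    omega
  exact lt_of_lt_of_le hT (gpaState_fst_mono b c γ d s ht)

lemma gres_val {T : ℕ} (hend : (∑ i, gpaL b c γ d s i T) < s)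
    {t : ℕ} (ht : t + 1 ≤ T) (i : Fin n) :
    (gres b c γ d s t).2 i
      = if (gpaState b c γ d s t).2.1 i - d i (t + 1) < b i ∧
           ((gpaState b c γ d s t).2.2 i : ℝ)
             ≤ γ i * ((∑ u ∈ Icc 1 (t + 1), d i u : ℕ) : ℝ)
        then c i * ((b i - ((gpaState b c γ d s t).2.1 i - d i (t + 1)) + c i - 1) / c i)
        else 0 := by
  have hpos : 0 < (gpaState b c γ d s (t + 1)).1 := gpaState_pos b c γ d s hend _ ht
  rw [gpaState_succ] at hpos
  have := foldl_value b c γ (fun j => ∑ u ∈ Icc 1 (t + 1), d j u)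
    (gpaState b c γ d s t).2.2
    (fun j => (gpaState b c γ d s t).2.1 j - d j (t + 1))
    (List.finRange n) ((gpaState b c γ d s t).1, fun _ => 0)
    (List.nodup_finRange n)
    (by rw [← gpaInner_eq]; exact hpos)
    i (List.mem_finRange i)
  rw [← gpaInner_eq] at this
  exact this

lemma stock_eq (i : Fin n) (t : ℕ) :
    stock (b i) (d i) (fun u => gpaAlloc b c γ d s i u) t
      = ((gpaState b c γ d s t).2.1 i : ℝ) := by
  induction t with
  | zero => simp [stock, gpaState]
  | succ t ih =>
    have halloc : gpaAlloc b c γ d s i (t + 1) = ((gres b c γ d s t).2 i : ℝ) := by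
      unfold gpaAlloc gpaL
      rw [Nat.add_sub_cancel, gpaState_succ]
      simp
    show max (stock (b i) (d i) (fun u => gpaAlloc b c γ d s i u) t - (d i (t + 1) : ℝ)) 0
        + gpaAlloc b c γ d s i (t + 1) = _
    rw [ih, halloc, gpaState_succ]
    simp only
    push_cast
    have : ((((gpaState b c γ d s t).2.1 i - d i (t + 1) : ℕ)) : ℝ)
        = max (((gpaState b c γ d s t).2.1 i : ℝ) - (d i (t + 1) : ℝ)) 0 := by
      rcases le_total (d i (t + 1)) ((gpaState b c γ d s t).2.1 i) with h | h
      · rw [Nat.cast_sub h, max_eq_left]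
        simp [h]
      · rw [Nat.sub_eq_zero_of_le h, max_eq_right]
        · simp
        · simp [h]
    rw [this]

end Outer

lemma gpa_invariant {n : ℕ} (T : ℕ) (c b : Fin n → ℕ) (hc : ∀ i, 1 ≤ c i)
    (s : ℕ) (d : Fin n → ℕ → ℕ) (hd : ∀ i, ∀ t ∈ Icc 1 T, d i t ≤ b i)
    (γ : Fin n → ℝ) (hγ : ∀ i, 0 ≤ γ i ∧ γ i ≤ 1)
    (hend : (∑ i, gpaL b c γ d s i T) < s) (i : Fin n) :
    ∀ t ≤ T, γ i * ((∑ u ∈ Icc 1 t, d i u : ℕ) : ℝ)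
        + max (((gpaState b c γ d s t).2.1 i : ℝ) - (b i : ℝ)) 0
      ≤ ((gpaState b c γ d s t).2.2 i : ℝ) := by
  intro t
  induction t with
  | zero =>
    intro _
    simp [gpaState]
  | succ t ih =>
    intro ht
    have ht' : t ≤ T := Nat.le_of_succ_le ht
    have IH := ih ht'
    set k := (gpaState b c γ d s t).2.1 i with hk
    set Lp := (gpaState b c γ d s t).2.2 i with hLp
    set dd := d i (t + 1) with hddN
    set D := ∑ u ∈ Icc 1 t, d i u with hD
    have hdd : dd ≤ b i := hd i (t + 1) (Finset.mem_Icc.mpr ⟨Nat.le_add_left 1 t, ht⟩)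
    have hDsplit : (∑ u ∈ Icc 1 (t + 1), d i u) = D + dd :=
      Finset.sum_Icc_succ_top (Nat.le_add_left 1 t) _
    have hDcast : ((∑ u ∈ Icc 1 (t + 1), d i u : ℕ) : ℝ) = (D : ℝ) + (dd : ℝ) := by
      rw [hDsplit]; push_cast; ring
    have hval := gres_val b c γ d s hend ht i
    have hdisj : (k - dd) + dd ≤ k ∨ (k - dd) + dd ≤ b i := by omega
    have hdisjR : (((k - dd : ℕ)) : ℝ) + (dd : ℝ) ≤ (k : ℝ)
        ∨ (((k - dd : ℕ)) : ℝ) + (dd : ℝ) ≤ (b i : ℝ) := by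
      rcases hdisj with h | h
      · left; exact_mod_cast h
      · right; exact_mod_cast h
    have hγ0 := (hγ i).1
    have hγ1 := (hγ i).2
    have hγd : γ i * (dd : ℝ) ≤ (dd : ℝ) :=
      mul_le_of_le_one_left (Nat.cast_nonneg dd) hγ1
    have hM1 : (k : ℝ) - (b i : ℝ) ≤ max ((k : ℝ) - (b i : ℝ)) 0 := le_max_left _ _
    have hM0 : (0 : ℝ) ≤ max ((k : ℝ) - (b i : ℝ)) 0 := le_max_right _ _
    have hsplit : γ i * ((D : ℝ) + (dd : ℝ)) = γ i * (D : ℝ) + γ i * (dd : ℝ) :=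
      mul_add _ _ _
    simp only [← hk, ← hLp, ← hddN] at hval
    simp only [gpaState_succ]
    simp only [← hk, ← hLp, ← hddN]
    rw [hval]
    by_cases helig : k - dd < b i ∧ (Lp : ℝ) ≤ γ i * ((∑ u ∈ Icc 1 (t + 1), d i u : ℕ) : ℝ)
    · simp only [if_pos helig]
      rw [hDcast]
      set q := (b i - (k - dd) + c i - 1) / c i with hq
      have hcq : b i - (k - dd) ≤ c i * q := by
        have h1 := Nat.div_add_mod (b i - (k - dd) + c i - 1) (c i)
        have h2 : (b i - (k - dd) + c i - 1) % c i < c i :=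
          Nat.mod_lt _ (hc i)
        have h3 := hc i
        rw [hq]
        omega
      have hK : b i ≤ (k - dd) + c i * q := by
        have := helig.1; omega
      have hmax : max ((((k - dd) + c i * q : ℕ) : ℝ) - (b i : ℝ)) 0
          = (((k - dd) + c i * q : ℕ) : ℝ) - (b i : ℝ) := by
        apply max_eq_left
        rw [sub_nonneg]
        exact_mod_cast hK
      rw [hmax]
      have hLpelig : (Lp : ℝ) ≤ γ i * ((D : ℝ) + (dd : ℝ)) := by
        rw [← hDcast]; exact helig.2
      push_cast
      rcases hdisjR with h | h
      · push_cast at h; linarith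
      · push_cast at h; linarith
    · simp only [if_neg helig, add_zero, Nat.add_zero]
      push_neg at helig
      by_cases hr : k - dd < b i
      · have hlt : γ i * ((∑ u ∈ Icc 1 (t + 1), d i u : ℕ) : ℝ) < (Lp : ℝ) :=
          helig hr
        rw [hDcast] at hlt ⊢
        have hmax : max ((((k - dd : ℕ)) : ℝ) - (b i : ℝ)) 0 = 0 := by
          apply max_eq_right
          rw [sub_nonpos]
          exact_mod_cast Nat.le_of_lt hr
        rw [hmax]
        linarith
      · have hb : (b i : ℝ) ≤ (((k - dd : ℕ)) : ℝ) := by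
          exact_mod_cast Nat.le_of_not_lt hr
        rw [hDcast]
        rcases max_cases ((((k - dd : ℕ)) : ℝ) - (b i : ℝ)) 0 with ⟨he, _⟩ | ⟨he, _⟩ <;>
          rw [he] <;> rcases hdisjR with h | h <;> linarith

/-- **Lower bound on cumulative allocation under GPA when the hub is not
exhausted.** If `s^end = s − Σ_i L_i > 0`, then for every site `i` and time
`t ∈ {0,…,T}` we have `L_i^t ≥ γ_i·D_i^t + (k_i^{t+1} − b_i)_+`; in particular
`L_i ≥ γ_i·D_i`. -/
theorem gpa_cumulative_lower_bound_not_exhausted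
    (n T : ℕ) (c b : Fin n → ℕ) (hc : ∀ i, 1 ≤ c i)
    (w : Fin n → ℝ) (hw : ∀ i, 0 ≤ w i)
    (p : ℝ) (hp : 0 ≤ p) (hwp : ∀ i, w i ≤ p * c i)
    (s : ℕ) (d : Fin n → ℕ → ℕ) (hd : ∀ i, ∀ t ∈ Icc 1 T, d i t ≤ b i)
    (γ : Fin n → ℝ) (hγ : ∀ i, 0 ≤ γ i ∧ γ i ≤ 1)
    (hend : (∑ i, gpaL b c γ d s i T) < s) :
    (∀ i, ∀ t ≤ T,
        γ i * ((∑ u ∈ Icc 1 t, d i u : ℕ) : ℝ)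
          + max (stock (b i) (d i) (fun u => gpaAlloc b c γ d s i u) t - (b i : ℝ)) 0
        ≤ (gpaL b c γ d s i t : ℝ)) ∧
    (∀ i, γ i * ((∑ u ∈ Icc 1 T, d i u : ℕ) : ℝ) ≤ (gpaL b c γ d s i T : ℝ)) := by
  have hmain : ∀ i, ∀ t ≤ T,
      γ i * ((∑ u ∈ Icc 1 t, d i u : ℕ) : ℝ)
        + max (stock (b i) (d i) (fun u => gpaAlloc b c γ d s i u) t - (b i : ℝ)) 0
      ≤ (gpaL b c γ d s i t : ℝ) := by
    intro i t ht
    rw [stock_eq b c γ d s i t]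
    exact gpa_invariant T c b hc s d hd γ hγ hend i t ht
  refine ⟨hmain, fun i => ?_⟩
  have h := hmain i T le_rfl
  have h0 : (0 : ℝ)
      ≤ max (stock (b i) (d i) (fun u => gpaAlloc b c γ d s i u) T - (b i : ℝ)) 0 :=
    le_max_right _ _
  linarith
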